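/- For the little q-Legendre Haar weights, sum_{k=0}^n h(k) < h(n)/(1-q) for all n in ℕ. -/

import Mathlib

theorem little_q_legendre_haar_sum_lt
    (q : ℝ) (hq : q ∈ Set.Ioo (0:ℝ) 1) (h : ℕ → ℝ)
    (hh : ∀ n : ℕ, h n = (1 / q ^ n) * (1 - q ^ (2 * n + 1)) / (1 - q)) (n : ℕ) :
    ∑ k ∈ Finset.range (n + 1), h k < h n / (1 - q) := by
  obtain ⟨hq0, hq1⟩ := hq
  have hq1' : 0 < 1 - q := by linarith
  induction n with
  | zero =>
      have h0 : h 0 = 1 := by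
        rw [hh 0]
        simp [hq1'.ne']
      rw [Finset.sum_range_one, h0, lt_div_iff₀ hq1']
      nlinarith
  | succ n ih =>
      rw [Finset.sum_range_succ]
      have key : h n ≤ q * h (n + 1) := by
        rw [hh n, hh (n + 1)]
        have e : q * ((1 / q ^ (n + 1)) * (1 - q ^ (2 * (n + 1) + 1)) / (1 - q))
            = (1 / q ^ n) * (1 - q ^ (2 * (n + 1) + 1)) / (1 - q) := by
          field_simp
          ring
        rw [e]
        have hle : q ^ (2 * (n + 1) + 1) ≤ q ^ (2 * n + 1) :=
          pow_le_pow_of_le_one (le_of_lt hq0) (le_of_lt hq1) (by omega)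
        apply div_le_div_of_nonneg_right ?_ hq1'.le
        apply mul_le_mul_of_nonneg_left (by linarith) (by positivity)
      have e2 : q * h (n + 1) / (1 - q) + h (n + 1) = h (n + 1) / (1 - q) := by
        field_simp
        ring
      have step : h n / (1 - q) ≤ q * h (n + 1) / (1 - q) :=
        (div_le_div_iff_of_pos_right hq1').mpr key
      linarith
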